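/- If every critical clique of G has at most k+1 vertices, every connected component of the critical clique graph CC(G) has at most 3k+1 critical cliques, and there are at most 4k non-isolated critical cliques, then G has at most 4k(k+1) vertices outside isolated cliques; hence the kernelization for CEVS (remove isolated cliques, truncate critical cliques to k+1 vertices, reject if more than 4k non-isolated critical cliques) produces an instance with at most 4k(k+1) vertices. -/
import Mathlib


open scoped Classical

/-- Vertices with equal closed neighborhoods; the equivalence classes are the
critical cliques of `G`. -/
def ccSetoid {V : Type*} (G : SimpleGraph V) : Setoid V :=
  ⟨fun u v => insert u (G.neighborSet u) = insert v (G.neighborSet v),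
    fun _ => rfl, Eq.symm, Eq.trans⟩

/-- The critical clique graph `CC(G)`: its vertices are the critical cliques of `G`,
two being adjacent iff some (equivalently, every) pair of representatives is
adjacent in `G`. -/
def ccGraph {V : Type*} (G : SimpleGraph V) : SimpleGraph (Quotient (ccSetoid G)) :=
  SimpleGraph.fromRel (fun a b =>
    ∃ u v : V, Quotient.mk (ccSetoid G) u = a ∧ Quotient.mk (ccSetoid G) v = b ∧ G.Adj u v)

/-- Size bound of the kernel: if every critical clique of `G` has at most `k + 1`
vertices, every connected component of `CC(G)` has at most `3k + 1` critical cliques,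
and there are at most `4k` non-isolated critical cliques, then `G` has at most
`4k(k + 1)` vertices outside isolated cliques (i.e. vertices whose critical clique is
a non-isolated vertex of `CC(G)`). -/
theorem kernel_size_bound {V : Type*} [Fintype V] (G : SimpleGraph V) (k : ℕ)
    (hsize : ∀ a : Quotient (ccSetoid G),
      (Finset.univ.filter (fun v : V => Quotient.mk (ccSetoid G) v = a)).card ≤ k + 1)
    (hcomp : ∀ c : (ccGraph G).ConnectedComponent,
      (Finset.univ.filter (fun a : Quotient (ccSetoid G) =>
        (ccGraph G).connectedComponentMk a = c)).card ≤ 3 * k + 1)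
    (hnoniso : (Finset.univ.filter (fun a : Quotient (ccSetoid G) =>
        ∃ b, (ccGraph G).Adj a b)).card ≤ 4 * k) :
    (Finset.univ.filter (fun v : V =>
        ∃ b, (ccGraph G).Adj (Quotient.mk (ccSetoid G) v) b)).card
      ≤ 4 * k * (k + 1) := by
  classical
  set S := Finset.univ.filter (fun a : Quotient (ccSetoid G) => ∃ b, (ccGraph G).Adj a b)
    with hS
  have hsub : (Finset.univ.filter (fun v : V =>
      ∃ b, (ccGraph G).Adj (Quotient.mk (ccSetoid G) v) b)) ⊆
      S.biUnion (fun a => Finset.univ.filter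
        (fun v : V => Quotient.mk (ccSetoid G) v = a)) := by
    intro v hv
    simp only [Finset.mem_filter, Finset.mem_univ, true_and] at hv
    exact Finset.mem_biUnion.2 ⟨Quotient.mk (ccSetoid G) v,
      by simp [hS, hv], Finset.mem_filter.2 ⟨Finset.mem_univ v, rfl⟩⟩
  calc (Finset.univ.filter (fun v : V =>
        ∃ b, (ccGraph G).Adj (Quotient.mk (ccSetoid G) v) b)).card
      ≤ (S.biUnion (fun a => Finset.univ.filter
          (fun v : V => Quotient.mk (ccSetoid G) v = a))).card :=
        Finset.card_le_card hsub
    _ ≤ ∑ a ∈ S, (Finset.univ.filter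
          (fun v : V => Quotient.mk (ccSetoid G) v = a)).card :=
        Finset.card_biUnion_le
    _ ≤ S.card * (k + 1) :=
        Finset.sum_le_card_nsmul _ _ _ (fun a _ => hsize a)
    _ ≤ 4 * k * (k + 1) := Nat.mul_le_mul_right _ hnoniso
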